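/- Let δ_x > 0, let x₀ ∈ ℝ², let X = x₀ + [−δ_x/2, δ_x/2]² be the closed square of side length δ_x centered at x₀, and let u = χ_X − (1/2)·χ_{∂X}, where ∂X is the topological boundary of X. Then for EVERY φ ∈ [0,π) and every s ∈ ℝ (including the degenerate cases where the line lies along an edge of X), ∫_ℝ u(s θ_φ + r θ_φ⊥) dr = δ_x² · w^rd(φ, x₀·θ_φ − s). -/

import Mathlib

open MeasureTheory Real Set Filter

/-- The ray-driven weight function `w^rd(φ, t)` (for spatial resolution `δx`).
Here `κ(φ) = min{1/|cos φ|, 1/|sin φ|}` (with `1/0 = ∞`) is expressed as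
`1 / max |cos φ| |sin φ|`, which is the same real number. -/
noncomputable def rayWeight (δx φ t : ℝ) : ℝ :=
  (1 / δx) *
    (if δx / 2 * |(|Real.cos φ| - |Real.sin φ|)| ≤ |t| ∧
        |t| < δx / 2 * (|Real.cos φ| + |Real.sin φ|) then
      (δx / 2 * (|Real.cos φ| + |Real.sin φ|) - |t|) / (δx * |Real.cos φ * Real.sin φ|)
    else if |t| < δx / 2 * |(|Real.cos φ| - |Real.sin φ|)| then
      1 / max |Real.cos φ| |Real.sin φ|
    else if (φ = 0 ∨ φ = Real.pi / 2) ∧ |t| = δx / 2 * (|Real.cos φ| + |Real.sin φ|) then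
      1 / 2
    else 0)

/-- The pixel-driven weight function `w^pd(t)` (for detector resolution `δs`). -/
noncomputable def pixelWeight (δs t : ℝ) : ℝ := (1 / δs ^ 2) * max (δs - |t|) 0

/-- For `δ_x > 0`, the closed square `X` of side length `δ_x` centered at
`x₀ ∈ ℝ²`, and `u = χ_X - (1/2)·χ_{∂X}`: for every `φ ∈ [0, π)` and every `s ∈ ℝ`
(including the degenerate cases where the line lies along an edge of `X`),
`∫_ℝ u(s θ_φ + r θ_φ^⊥) dr = δ_x² · w^rd(φ, x₀ · θ_φ - s)`. -/
lemma setIcc (u v h : ℝ) (hv : v ≠ 0) :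
    {r : ℝ | |u - r * v| ≤ h} = Icc (u/v - h/|v|) (u/v + h/|v|) := by
  ext r
  have hv' : 0 < |v| := abs_pos.2 hv
  have he : u - r * v = v * (u/v - r) := by field_simp
  rw [mem_setOf_eq, mem_Icc, he, abs_mul, ← le_div_iff₀' hv', abs_le]
  constructor
  · rintro ⟨h1, h2⟩; constructor <;> linarith
  · rintro ⟨h1, h2⟩; constructor <;> linarith

lemma setIoo (u v h : ℝ) (hv : v ≠ 0) :
    {r : ℝ | |u - r * v| < h} = Ioo (u/v - h/|v|) (u/v + h/|v|) := by
  ext r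
  have hv' : 0 < |v| := abs_pos.2 hv
  have he : u - r * v = v * (u/v - r) := by field_simp
  rw [mem_setOf_eq, mem_Ioo, he, abs_mul, ← lt_div_iff₀' hv', abs_lt]
  constructor
  · rintro ⟨h1, h2⟩; constructor <;> linarith
  · rintro ⟨h1, h2⟩; constructor <;> linarith

lemma minmax (x y p q : ℝ) :
    min (x+p) (y+q) - max (x-p) (y-q) = min (p + q - |y - x|) (min (2*p) (2*q)) := by
  rcases abs_cases (y - x) with ⟨h1, h2⟩ | ⟨h1, h2⟩ <;> rw [h1] <;>
    simp only [min_def, max_def] <;> split_ifs <;> linarith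

lemma u_eq' (X : Set (ℝ×ℝ)) (hXc : IsClosed X) (y : ℝ×ℝ) :
    X.indicator (fun _ => (1:ℝ)) y - 1/2 * (frontier X).indicator (fun _ => (1:ℝ)) y
      = 1/2 * (X.indicator (fun _ => (1:ℝ)) y + (interior X).indicator (fun _ => (1:ℝ)) y) := by
  rw [hXc.frontier_eq]
  by_cases h1 : y ∈ X <;> by_cases h2 : y ∈ interior X
  · simp [Set.indicator_apply, h1, h2]; ring
  · simp [Set.indicator_apply, h1, h2]; ring
  · exact absurd (interior_subset h2) h1
  · simp [Set.indicator_apply, h1, h2]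

lemma key_reduce (X : Set (ℝ×ℝ)) (hXc : IsClosed X) (u : ℝ×ℝ → ℝ)
    (hu : u = fun y => Set.indicator X (fun _ => (1 : ℝ)) y -
      1 / 2 * Set.indicator (frontier X) (fun _ => (1 : ℝ)) y)
    (p : ℝ → ℝ×ℝ) (A B : Set ℝ) (hA : MeasurableSet A) (hB : MeasurableSet B)
    (hAv : volume A ≠ ⊤) (hBv : volume B ≠ ⊤)
    (hiffA : ∀ r, p r ∈ X ↔ r ∈ A) (hiffB : ∀ r, p r ∈ interior X ↔ r ∈ B) :
    (∫ r : ℝ, u (p r)) = 1/2 * ((volume A).toReal + (volume B).toReal) := by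
  have hiA : Integrable (A.indicator (fun _ => (1:ℝ))) volume :=
    (integrable_indicator_iff hA).2 (integrableOn_const hAv)
  have hiB : Integrable (B.indicator (fun _ => (1:ℝ))) volume :=
    (integrable_indicator_iff hB).2 (integrableOn_const hBv)
  have hfun : (fun r => u (p r)) =
      fun r => (1/2 : ℝ) * (A.indicator (fun _ => (1:ℝ)) r + B.indicator (fun _ => (1:ℝ)) r) := by
    funext r
    simp only [hu]
    rw [u_eq' X hXc]
    by_cases h1 : p r ∈ X <;> by_cases h2 : p r ∈ interior X <;>
      simp [Set.indicator_apply, h1, h2, (hiffA r).symm, (hiffB r).symm]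
  rw [hfun, integral_const_mul, integral_add hiA hiB]
  have e1 : ∫ a : ℝ, A.indicator (fun _ => (1:ℝ)) a = (volume A).toReal :=
    integral_indicator_one hA
  have e2 : ∫ a : ℝ, B.indicator (fun _ => (1:ℝ)) a = (volume B).toReal :=
    integral_indicator_one hB
  rw [e1, e2]

lemma arith (δx φ t : ℝ) (hδx : 0 < δx) (hb : 0 < |Real.sin φ|) (ha : 0 < |Real.cos φ|)
    (hne : ¬(φ = 0 ∨ φ = Real.pi/2)) :
    (min ((δx/2)/|Real.sin φ| + (δx/2)/|Real.cos φ| - |t| / (|Real.sin φ| * |Real.cos φ|))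
         (min (2*((δx/2)/|Real.sin φ|)) (2*((δx/2)/|Real.cos φ|)))) ⊔ 0
      = δx^2 * rayWeight δx φ t := by
  unfold rayWeight
  rw [abs_mul]
  set a := |Real.cos φ| with hadef
  set b := |Real.sin φ| with hbdef
  set T := |t| with hTdef
  have hT : 0 ≤ T := abs_nonneg t
  have hab : 0 < a*b := mul_pos ha hb
  have hba : 0 < b*a := mul_pos hb ha
  have eX : (δx/2)/b + (δx/2)/a - T/(b*a) = (δx/2*(a+b) - T)/(a*b) := by
    field_simp
  have eY : 2*((δx/2)/b) = δx/b := by ring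
  have eZ : 2*((δx/2)/a) = δx/a := by ring
  rw [eX, eY, eZ]
  split_ifs with hc1 hc2 hc3
  · have hXpos : 0 < (δx/2*(a+b) - T)/(a*b) := div_pos (by linarith [hc1.2]) hab
    have h1 : δx/2*(b-a) ≤ T := by
      have h2 : b - a ≤ |a - b| := by rw [abs_sub_comm]; exact le_abs_self _
      nlinarith [hc1.1]
    have h2 : δx/2*(a-b) ≤ T := by
      have h3 : a - b ≤ |a - b| := le_abs_self _
      nlinarith [hc1.1]
    have hXY : (δx/2*(a+b) - T)/(a*b) ≤ δx/b := by
      rw [div_le_div_iff₀ hab hb]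
      nlinarith [mul_le_mul_of_nonneg_right h1 hb.le]
    have hXZ : (δx/2*(a+b) - T)/(a*b) ≤ δx/a := by
      rw [div_le_div_iff₀ hab ha]
      nlinarith [mul_le_mul_of_nonneg_right h2 ha.le]
    rw [min_eq_left (le_min hXY hXZ), max_eq_left hXpos.le]
    field_simp
  · rcases le_total a b with hle | hle
    · have habs : |a - b| = b - a := by rw [abs_of_nonpos (by linarith)]; ring
      rw [habs] at hc2
      have hYZ : δx/b ≤ δx/a := div_le_div_of_nonneg_left hδx.le ha hle
      have hYX : δx/b ≤ (δx/2*(a+b) - T)/(a*b) := by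
        rw [div_le_div_iff₀ hb hab]
        nlinarith [hc2]
      have hmax : max a b = b := max_eq_right hle
      rw [min_eq_left hYZ, min_eq_right hYX, max_eq_left (by positivity), hmax]
      field_simp
    · have habs : |a - b| = a - b := abs_of_nonneg (by linarith)
      rw [habs] at hc2
      have hYZ : δx/a ≤ δx/b := div_le_div_of_nonneg_left hδx.le hb hle
      have hZX : δx/a ≤ (δx/2*(a+b) - T)/(a*b) := by
        rw [div_le_div_iff₀ ha hab]
        nlinarith [hc2]
      have hmax : max a b = a := max_eq_left hle
      rw [min_eq_right hYZ, min_eq_right hZX, max_eq_left (by positivity), hmax]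
      field_simp
  · exact absurd hc3.1 hne
  · push_neg at hc1 hc2
    have hTlarge : δx/2*(a+b) ≤ T := hc1 hc2
    have hX0 : (δx/2*(a+b) - T)/(a*b) ≤ 0 :=
      div_nonpos_of_nonpos_of_nonneg (by linarith) hab.le
    rw [max_eq_right (le_trans (min_le_left _ _) hX0)]
    ring

theorem stmt1 (δx : ℝ) (hδx : 0 < δx) (x₀ : ℝ × ℝ)
    (X : Set (ℝ × ℝ))
    (hX : X = {y | |y.1 - x₀.1| ≤ δx / 2 ∧ |y.2 - x₀.2| ≤ δx / 2})
    (u : ℝ × ℝ → ℝ)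
    (hu : u = fun y => Set.indicator X (fun _ => (1 : ℝ)) y -
      1 / 2 * Set.indicator (frontier X) (fun _ => (1 : ℝ)) y)
    (φ : ℝ) (hφ : φ ∈ Set.Ico 0 Real.pi) (s : ℝ) :
    (∫ r : ℝ, u (s * Real.cos φ - r * Real.sin φ, s * Real.sin φ + r * Real.cos φ))
      = δx ^ 2 * rayWeight δx φ (x₀.1 * Real.cos φ + x₀.2 * Real.sin φ - s) := by
  obtain ⟨hφ0, hφπ⟩ := hφ
  have hδ : δx ≠ 0 := ne_of_gt hδx
  have hXprod : X = Icc (x₀.1 - δx/2) (x₀.1 + δx/2) ×ˢ Icc (x₀.2 - δx/2) (x₀.2 + δx/2) := by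
    rw [hX]; ext y
    simp only [mem_setOf_eq, Set.mem_prod, mem_Icc, abs_le]
    constructor
    · rintro ⟨⟨a1, a2⟩, b1, b2⟩; exact ⟨⟨by linarith, by linarith⟩, by linarith, by linarith⟩
    · rintro ⟨⟨a1, a2⟩, b1, b2⟩; exact ⟨⟨by linarith, by linarith⟩, by linarith, by linarith⟩
  have hXc : IsClosed X := by rw [hXprod]; exact isClosed_Icc.prod isClosed_Icc
  have hXMem : ∀ y1 y2 : ℝ, ((y1, y2) ∈ X) ↔ (|y1 - x₀.1| ≤ δx/2 ∧ |y2 - x₀.2| ≤ δx/2) := by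
    intro y1 y2; rw [hX]; exact Iff.rfl
  have hIntMem : ∀ y1 y2 : ℝ,
      ((y1, y2) ∈ interior X) ↔ (|y1 - x₀.1| < δx/2 ∧ |y2 - x₀.2| < δx/2) := by
    intro y1 y2
    rw [hXprod, interior_prod_eq, interior_Icc, interior_Icc]
    simp only [Set.mem_prod, mem_Ioo, abs_lt]
    constructor
    · rintro ⟨⟨a1, a2⟩, b1, b2⟩; exact ⟨⟨by linarith, by linarith⟩, by linarith, by linarith⟩
    · rintro ⟨⟨a1, a2⟩, b1, b2⟩; exact ⟨⟨by linarith, by linarith⟩, by linarith, by linarith⟩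
  by_cases hφzero : φ = 0
  · subst hφzero
    have E1 : ∀ r : ℝ, s*Real.cos 0 - r*Real.sin 0 - x₀.1 = s - x₀.1 := fun r => by
      rw [Real.cos_zero, Real.sin_zero]; ring
    have E2 : ∀ r : ℝ, s*Real.sin 0 + r*Real.cos 0 - x₀.2 = r - x₀.2 := fun r => by
      rw [Real.cos_zero, Real.sin_zero]; ring
    have hTv : x₀.1 * Real.cos 0 + x₀.2 * Real.sin 0 - s = x₀.1 - s := by
      rw [Real.cos_zero, Real.sin_zero]; ring
    rcases lt_trichotomy (|s - x₀.1|) (δx/2) with hcase | hcase | hcase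
    · refine (key_reduce X hXc u hu _
        (Icc (x₀.2 - δx/2) (x₀.2 + δx/2)) (Ioo (x₀.2 - δx/2) (x₀.2 + δx/2))
        measurableSet_Icc measurableSet_Ioo
        (by rw [Real.volume_Icc]; exact ENNReal.ofReal_ne_top)
        (by rw [Real.volume_Ioo]; exact ENNReal.ofReal_ne_top) ?_ ?_).trans ?_
      · intro r
        rw [hXMem, mem_Icc]
        constructor
        · rintro ⟨-, h2⟩
          rw [E2 r] at h2
          have h3 := abs_le.1 h2
          exact ⟨by linarith [h3.1], by linarith [h3.2]⟩
        · rintro ⟨h2, h3⟩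
          refine ⟨?_, ?_⟩
          · rw [E1 r]; exact hcase.le
          · rw [E2 r]; exact abs_le.2 ⟨by linarith, by linarith⟩
      · intro r
        rw [hIntMem, mem_Ioo]
        constructor
        · rintro ⟨-, h2⟩
          rw [E2 r] at h2
          have h3 := abs_lt.1 h2
          exact ⟨by linarith [h3.1], by linarith [h3.2]⟩
        · rintro ⟨h2, h3⟩
          refine ⟨?_, ?_⟩
          · rw [E1 r]; exact hcase
          · rw [E2 r]; exact abs_lt.2 ⟨by linarith, by linarith⟩
      · rw [Real.volume_Icc, Real.volume_Ioo, ENNReal.toReal_ofReal (by linarith)]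
        unfold rayWeight
        rw [hTv]
        have hT : |x₀.1 - s| < δx/2 := by rw [abs_sub_comm]; exact hcase
        rw [Real.cos_zero, Real.sin_zero, abs_one, abs_zero,
          (by norm_num : |(1:ℝ) - 0| = 1)]
        rw [if_neg (by rintro ⟨hh1, hh2⟩; linarith), if_pos (by linarith)]
        rw [max_eq_left (by norm_num)]
        field_simp
        ring
    · refine (key_reduce X hXc u hu _
        (Icc (x₀.2 - δx/2) (x₀.2 + δx/2)) (∅ : Set ℝ)
        measurableSet_Icc MeasurableSet.empty
        (by rw [Real.volume_Icc]; exact ENNReal.ofReal_ne_top)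
        (by simp) ?_ ?_).trans ?_
      · intro r
        rw [hXMem, mem_Icc]
        constructor
        · rintro ⟨-, h2⟩
          rw [E2 r] at h2
          have h3 := abs_le.1 h2
          exact ⟨by linarith [h3.1], by linarith [h3.2]⟩
        · rintro ⟨h2, h3⟩
          refine ⟨?_, ?_⟩
          · rw [E1 r]; exact hcase.le
          · rw [E2 r]; exact abs_le.2 ⟨by linarith, by linarith⟩
      · intro r
        simp only [mem_empty_iff_false, iff_false]
        intro hmem
        obtain ⟨h1, -⟩ := (hIntMem _ _).1 hmem
        rw [E1 r] at h1
        rw [hcase] at h1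
        exact lt_irrefl _ h1
      · rw [Real.volume_Icc, ENNReal.toReal_ofReal (by linarith)]
        simp only [measure_empty, ENNReal.toReal_zero]
        unfold rayWeight
        rw [hTv]
        have hT : |x₀.1 - s| = δx/2 := by rw [abs_sub_comm]; exact hcase
        rw [Real.cos_zero, Real.sin_zero, abs_one, abs_zero,
          (by norm_num : |(1:ℝ) - 0| = 1)]
        rw [if_neg (by rintro ⟨hh1, hh2⟩; linarith), if_neg (by intro hh; linarith),
          if_pos ⟨Or.inl rfl, by rw [hT]; ring⟩]
        field_simp
        ring
    · refine (key_reduce X hXc u hu _ (∅ : Set ℝ) (∅ : Set ℝ)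
        MeasurableSet.empty MeasurableSet.empty (by simp) (by simp) ?_ ?_).trans ?_
      · intro r
        simp only [mem_empty_iff_false, iff_false]
        intro hmem
        obtain ⟨h1, -⟩ := (hXMem _ _).1 hmem
        rw [E1 r] at h1
        linarith
      · intro r
        simp only [mem_empty_iff_false, iff_false]
        intro hmem
        obtain ⟨h1, -⟩ := (hIntMem _ _).1 hmem
        rw [E1 r] at h1
        linarith
      · simp only [measure_empty, ENNReal.toReal_zero]
        unfold rayWeight
        rw [hTv]
        have hT : |x₀.1 - s| > δx/2 := by rw [abs_sub_comm]; exact hcase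
        rw [Real.cos_zero, Real.sin_zero, abs_one, abs_zero,
          (by norm_num : |(1:ℝ) - 0| = 1)]
        rw [if_neg (by rintro ⟨hh1, hh2⟩; linarith), if_neg (by intro hh; linarith),
          if_neg (by rintro ⟨-, hh⟩; linarith)]
        ring
  by_cases hφhalf : φ = Real.pi/2
  · subst hφhalf
    have E1 : ∀ r : ℝ, s*Real.cos (Real.pi/2) - r*Real.sin (Real.pi/2) - x₀.1 = -r - x₀.1 :=
      fun r => by rw [Real.cos_pi_div_two, Real.sin_pi_div_two]; ring
    have E2 : ∀ r : ℝ, s*Real.sin (Real.pi/2) + r*Real.cos (Real.pi/2) - x₀.2 = s - x₀.2 :=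
      fun r => by rw [Real.cos_pi_div_two, Real.sin_pi_div_two]; ring
    have hTv : x₀.1 * Real.cos (Real.pi/2) + x₀.2 * Real.sin (Real.pi/2) - s = x₀.2 - s := by
      rw [Real.cos_pi_div_two, Real.sin_pi_div_two]; ring
    rcases lt_trichotomy (|s - x₀.2|) (δx/2) with hcase | hcase | hcase
    · refine (key_reduce X hXc u hu _
        (Icc (-x₀.1 - δx/2) (-x₀.1 + δx/2)) (Ioo (-x₀.1 - δx/2) (-x₀.1 + δx/2))
        measurableSet_Icc measurableSet_Ioo
        (by rw [Real.volume_Icc]; exact ENNReal.ofReal_ne_top)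
        (by rw [Real.volume_Ioo]; exact ENNReal.ofReal_ne_top) ?_ ?_).trans ?_
      · intro r
        rw [hXMem, mem_Icc]
        constructor
        · rintro ⟨h1, -⟩
          rw [E1 r] at h1
          have h3 := abs_le.1 h1
          exact ⟨by linarith [h3.2], by linarith [h3.1]⟩
        · rintro ⟨h2, h3⟩
          refine ⟨?_, ?_⟩
          · rw [E1 r]; exact abs_le.2 ⟨by linarith, by linarith⟩
          · rw [E2 r]; exact hcase.le
      · intro r
        rw [hIntMem, mem_Ioo]
        constructor
        · rintro ⟨h1, -⟩
          rw [E1 r] at h1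
          have h3 := abs_lt.1 h1
          exact ⟨by linarith [h3.2], by linarith [h3.1]⟩
        · rintro ⟨h2, h3⟩
          refine ⟨?_, ?_⟩
          · rw [E1 r]; exact abs_lt.2 ⟨by linarith, by linarith⟩
          · rw [E2 r]; exact hcase
      · rw [Real.volume_Icc, Real.volume_Ioo, ENNReal.toReal_ofReal (by linarith)]
        unfold rayWeight
        rw [hTv]
        have hT : |x₀.2 - s| < δx/2 := by rw [abs_sub_comm]; exact hcase
        rw [Real.cos_pi_div_two, Real.sin_pi_div_two, abs_one, abs_zero,
          (by norm_num : |(0:ℝ) - 1| = 1)]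
        rw [if_neg (by rintro ⟨hh1, hh2⟩; linarith), if_pos (by linarith)]
        rw [max_eq_right (by norm_num)]
        field_simp
        ring
    · refine (key_reduce X hXc u hu _
        (Icc (-x₀.1 - δx/2) (-x₀.1 + δx/2)) (∅ : Set ℝ)
        measurableSet_Icc MeasurableSet.empty
        (by rw [Real.volume_Icc]; exact ENNReal.ofReal_ne_top)
        (by simp) ?_ ?_).trans ?_
      · intro r
        rw [hXMem, mem_Icc]
        constructor
        · rintro ⟨h1, -⟩
          rw [E1 r] at h1
          have h3 := abs_le.1 h1
          exact ⟨by linarith [h3.2], by linarith [h3.1]⟩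
        · rintro ⟨h2, h3⟩
          refine ⟨?_, ?_⟩
          · rw [E1 r]; exact abs_le.2 ⟨by linarith, by linarith⟩
          · rw [E2 r]; exact hcase.le
      · intro r
        simp only [mem_empty_iff_false, iff_false]
        intro hmem
        obtain ⟨-, h2⟩ := (hIntMem _ _).1 hmem
        rw [E2 r] at h2
        rw [hcase] at h2
        exact lt_irrefl _ h2
      · rw [Real.volume_Icc, ENNReal.toReal_ofReal (by linarith)]
        simp only [measure_empty, ENNReal.toReal_zero]
        unfold rayWeight
        rw [hTv]
        have hT : |x₀.2 - s| = δx/2 := by rw [abs_sub_comm]; exact hcase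
        rw [Real.cos_pi_div_two, Real.sin_pi_div_two, abs_one, abs_zero,
          (by norm_num : |(0:ℝ) - 1| = 1)]
        rw [if_neg (by rintro ⟨hh1, hh2⟩; linarith), if_neg (by intro hh; linarith),
          if_pos ⟨Or.inr rfl, by rw [hT]; ring⟩]
        field_simp
        ring
    · refine (key_reduce X hXc u hu _ (∅ : Set ℝ) (∅ : Set ℝ)
        MeasurableSet.empty MeasurableSet.empty (by simp) (by simp) ?_ ?_).trans ?_
      · intro r
        simp only [mem_empty_iff_false, iff_false]
        intro hmem
        obtain ⟨-, h2⟩ := (hXMem _ _).1 hmem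
        rw [E2 r] at h2
        linarith
      · intro r
        simp only [mem_empty_iff_false, iff_false]
        intro hmem
        obtain ⟨-, h2⟩ := (hIntMem _ _).1 hmem
        rw [E2 r] at h2
        linarith
      · simp only [measure_empty, ENNReal.toReal_zero]
        unfold rayWeight
        rw [hTv]
        have hT : |x₀.2 - s| > δx/2 := by rw [abs_sub_comm]; exact hcase
        rw [Real.cos_pi_div_two, Real.sin_pi_div_two, abs_one, abs_zero,
          (by norm_num : |(0:ℝ) - 1| = 1)]
        rw [if_neg (by rintro ⟨hh1, hh2⟩; linarith), if_neg (by intro hh; linarith),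
          if_neg (by rintro ⟨-, hh⟩; linarith)]
        ring
  -- nondegenerate case
  have hsinpos : 0 < Real.sin φ :=
    Real.sin_pos_of_pos_of_lt_pi (lt_of_le_of_ne hφ0 (Ne.symm hφzero)) hφπ
  have hsinne : Real.sin φ ≠ 0 := ne_of_gt hsinpos
  have hcosne : Real.cos φ ≠ 0 := by
    intro hc
    obtain ⟨k, hk⟩ := Real.cos_eq_zero_iff.1 hc
    have hπ := Real.pi_pos
    rw [hk] at hφ0 hφπ
    have hk1 : (0:ℝ) ≤ 2*(k:ℝ)+1 := by nlinarith
    have hk2 : 2*(k:ℝ)+1 < 2 := by nlinarith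
    have h5 : (-1:ℤ) < k := by exact_mod_cast (by push_cast; linarith : (-1:ℝ) < (k:ℝ))
    have h6 : (k:ℤ) < 1 := by exact_mod_cast (by push_cast; linarith : ((k:ℤ):ℝ) < 1)
    have hk0 : k = 0 := by omega
    rw [hk0] at hk
    apply hφhalf
    rw [hk]; push_cast; ring
  have hb : 0 < |Real.sin φ| := abs_pos.2 hsinne
  have ha : 0 < |Real.cos φ| := abs_pos.2 hcosne
  have C1 : ∀ r : ℝ, |s*Real.cos φ - r*Real.sin φ - x₀.1|
      = |(s*Real.cos φ - x₀.1) - r*Real.sin φ| := fun r => by congr 1; ring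
  have C2 : ∀ r : ℝ, |s*Real.sin φ + r*Real.cos φ - x₀.2|
      = |(x₀.2 - s*Real.sin φ) - r*Real.cos φ| := fun r => by
    rw [abs_sub_comm]; congr 1; ring
  refine (key_reduce X hXc u hu _
      (Icc ((s*Real.cos φ - x₀.1)/Real.sin φ - (δx/2)/|Real.sin φ|)
           ((s*Real.cos φ - x₀.1)/Real.sin φ + (δx/2)/|Real.sin φ|) ∩
       Icc ((x₀.2 - s*Real.sin φ)/Real.cos φ - (δx/2)/|Real.cos φ|)
           ((x₀.2 - s*Real.sin φ)/Real.cos φ + (δx/2)/|Real.cos φ|))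
      (Ioo ((s*Real.cos φ - x₀.1)/Real.sin φ - (δx/2)/|Real.sin φ|)
           ((s*Real.cos φ - x₀.1)/Real.sin φ + (δx/2)/|Real.sin φ|) ∩
       Ioo ((x₀.2 - s*Real.sin φ)/Real.cos φ - (δx/2)/|Real.cos φ|)
           ((x₀.2 - s*Real.sin φ)/Real.cos φ + (δx/2)/|Real.cos φ|))
      (measurableSet_Icc.inter measurableSet_Icc)
      (measurableSet_Ioo.inter measurableSet_Ioo)
      (by rw [Icc_inter_Icc, Real.volume_Icc]; exact ENNReal.ofReal_ne_top)
      (by rw [Ioo_inter_Ioo, Real.volume_Ioo]; exact ENNReal.ofReal_ne_top) ?_ ?_).trans ?_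
  · intro r
    rw [hXMem, mem_inter_iff, C1 r, C2 r,
      ← setIcc (s*Real.cos φ - x₀.1) (Real.sin φ) (δx/2) hsinne,
      ← setIcc (x₀.2 - s*Real.sin φ) (Real.cos φ) (δx/2) hcosne,
      mem_setOf_eq, mem_setOf_eq]
  · intro r
    rw [hIntMem, mem_inter_iff, C1 r, C2 r,
      ← setIoo (s*Real.cos φ - x₀.1) (Real.sin φ) (δx/2) hsinne,
      ← setIoo (x₀.2 - s*Real.sin φ) (Real.cos φ) (δx/2) hcosne,
      mem_setOf_eq, mem_setOf_eq]
  · rw [Icc_inter_Icc, Ioo_inter_Ioo, Real.volume_Icc, Real.volume_Ioo,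
      ENNReal.toReal_ofReal']
    have hhalf : ∀ x : ℝ, 1/2 * (x + x) = x := fun x => by ring
    rw [hhalf]
    rw [minmax]
    have hΔ : (x₀.2 - s*Real.sin φ)/Real.cos φ - (s*Real.cos φ - x₀.1)/Real.sin φ
        = (x₀.1 * Real.cos φ + x₀.2 * Real.sin φ - s)/(Real.sin φ * Real.cos φ) := by
      field_simp
      linear_combination (-s) * Real.sin_sq_add_cos_sq φ
    rw [hΔ, abs_div, abs_mul]
    exact arith δx φ _ hδx hb ha (by rintro (h|h); exacts [hφzero h, hφhalf h])
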